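/- Let x be a non-uniform lattice of either class and δ ∈ ℝ. Then for every z ∈ ℂ at which the occurring denominators are nonzero, σ*(z) + ½·τ*_δ(z)·Δx_{δ−1}(z) = σ(z+1) + ½·τ_{δ−2}(z+1)·Δx_{δ−1}(z) = σ̃_{δ−2}(z+1); moreover there exist constants A, B, C ∈ ℂ such that σ(z+1) + ½·τ_{δ−2}(z+1)·Δx_{δ−1}(z) = A·x_δ(z)² + B·x_δ(z) + C at all such z. Hence the adjoint difference equation is again a difference equation of hypergeometric type on the non-uniform lattice. (Theorem 3.1, with δ = ν−μ) -/
import Mathlib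


noncomputable section

open Finset

/-- `x` is a non-uniform lattice of one of the two classes (q-quadratic with
`q = e^w`, or quadratic), together with its associated functions `α = a` and
`γ = g`. -/
def IsNonUniformLattice (w : ℂ) (x : ℂ → ℂ) (a g : ℝ → ℂ) : Prop :=
  (Complex.exp w ≠ 1 ∧
    ∃ c1 c2 c3 : ℂ, c1 * c2 ≠ 0 ∧
      (∀ s : ℂ, x s = c1 * Complex.exp (s * w) + c2 * Complex.exp (-(s * w)) + c3) ∧
      (∀ μ : ℝ, a μ =
        (Complex.exp ((μ : ℂ) / 2 * w) + Complex.exp (-((μ : ℂ) / 2 * w))) / 2) ∧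
      (∀ μ : ℝ, g μ =
        (Complex.exp ((μ : ℂ) / 2 * w) - Complex.exp (-((μ : ℂ) / 2 * w))) /
          (Complex.exp ((1 : ℂ) / 2 * w) - Complex.exp (-((1 : ℂ) / 2 * w))))) ∨
  (∃ c1 c2 c3 : ℂ, c1 ≠ 0 ∧
    (∀ s : ℂ, x s = c1 * s ^ 2 + c2 * s + c3) ∧
    (∀ μ : ℝ, a μ = 1) ∧ (∀ μ : ℝ, g μ = (μ : ℂ)))

/-- `xl x ν s = x_ν(s) = x (s + ν/2)`. -/
def xl (x : ℂ → ℂ) (ν : ℝ) (s : ℂ) : ℂ := x (s + (ν : ℂ) / 2)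

/-- `σ(z) = σ̃(x z) - (1/2)·τ̃(x z)·∇x₁(z)`. -/
def sig (x : ℂ → ℂ) (st tt : Polynomial ℂ) (z : ℂ) : ℂ :=
  st.eval (x z) - (1 / 2) * tt.eval (x z) * (xl x 1 z - xl x 1 (z - 1))

/-- `κ_ν = α(ν-1)·τ̃' + (1/2)·γ(ν-1)·σ̃''`. -/
def kap (a g : ℝ → ℂ) (st tt : Polynomial ℂ) (ν : ℝ) : ℂ :=
  a (ν - 1) * tt.coeff 1 + (1 / 2) * g (ν - 1) * (2 * st.coeff 2)

/-- Backward difference quotient `∇_ν f (z) = ∇f(z)/∇x_ν(z)`. -/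
def nab (x : ℂ → ℂ) (ν : ℝ) (f : ℂ → ℂ) (z : ℂ) : ℂ :=
  (f z - f (z - 1)) / (xl x ν z - xl x ν (z - 1))

/-- Forward difference quotient `Δ_ν f (z) = Δf(z)/Δx_ν(z)`. -/
def del (x : ℂ → ℂ) (ν : ℝ) (f : ℂ → ℂ) (z : ℂ) : ℂ :=
  (f (z + 1) - f z) / (xl x ν (z + 1) - xl x ν z)

/-- Generalized power `[x_α(s) - x_α(z)]^{(m)} = ∏_{k=0}^{m-1} (x_α(s) - x_α(z-k))`. -/
def gp (x : ℂ → ℂ) (m : ℕ) (al : ℝ) (s z : ℂ) : ℂ :=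
  ∏ k ∈ Finset.range m, (xl x al s - xl x al (z - (k : ℂ)))

/-- The defining relation for the family `τ_ν = T ν`:
`τ_ν(z)·∇x_{ν+1}(z) = σ(z+ν) - σ(z) + τ(z+ν)·∇x₁(z+ν)`. -/
def TauFamily (x : ℂ → ℂ) (st tt : Polynomial ℂ) (T : ℝ → ℂ → ℂ) : Prop :=
  ∀ (ν : ℝ) (z : ℂ),
    T ν z * (xl x (ν + 1) z - xl x (ν + 1) (z - 1)) =
      sig x st tt (z + (ν : ℂ)) - sig x st tt z +
        tt.eval (x (z + (ν : ℂ))) * (xl x 1 (z + (ν : ℂ)) - xl x 1 (z + (ν : ℂ) - 1))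

/-- Adjoint data: `σ*(z) = σ(z-1) + τ_δ(z-1)·∇x_{δ-1}(z)`. -/
def sigStar (x : ℂ → ℂ) (st tt : Polynomial ℂ) (T : ℝ → ℂ → ℂ) (δ : ℝ) (z : ℂ) : ℂ :=
  sig x st tt (z - 1) + T δ (z - 1) * (xl x (δ - 1) z - xl x (δ - 1) (z - 1))

/-- Adjoint data: `τ*_δ(z) = (σ(z+1) - σ(z-1) - τ_δ(z-1)·∇x_{δ-1}(z)) / Δx_{δ-1}(z)`. -/
def tauStar (x : ℂ → ℂ) (st tt : Polynomial ℂ) (T : ℝ → ℂ → ℂ) (δ : ℝ) (z : ℂ) : ℂ :=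
  (sig x st tt (z + 1) - sig x st tt (z - 1) -
      T δ (z - 1) * (xl x (δ - 1) z - xl x (δ - 1) (z - 1))) /
    (xl x (δ - 1) (z + 1) - xl x (δ - 1) z)


lemma eval_deg2 (p : Polynomial ℂ) (hp : p.degree ≤ 2) (y : ℂ) :
    p.eval y = p.coeff 0 + p.coeff 1 * y + p.coeff 2 * y ^ 2 := by
  have h : p.natDegree < 3 :=
    lt_of_le_of_lt (Polynomial.natDegree_le_iff_degree_le.mpr hp) (by norm_num)
  rw [Polynomial.eval_eq_sum_range' h]
  simp [Finset.sum_range_succ]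

lemma eval_deg1 (p : Polynomial ℂ) (hp : p.degree ≤ 1) (y : ℂ) :
    p.eval y = p.coeff 0 + p.coeff 1 * y := by
  have h : p.natDegree < 2 :=
    lt_of_le_of_lt (Polynomial.natDegree_le_iff_degree_le.mpr hp) (by norm_num)
  rw [Polynomial.eval_eq_sum_range' h]
  simp [Finset.sum_range_succ]

set_option maxHeartbeats 2000000 in
/-- Theorem 3.1 (with `δ = ν - μ`): the adjoint equation is again of
hypergeometric type. -/
theorem thm3_1
    (w : ℂ) (x : ℂ → ℂ) (a g : ℝ → ℂ)
    (hlat : IsNonUniformLattice w x a g)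
    (st tt : Polynomial ℂ) (hst : st.degree ≤ 2) (htt : tt.degree ≤ 1)
    (T : ℝ → ℂ → ℂ) (hT : TauFamily x st tt T) (δ : ℝ) :
    ∃ A B C : ℂ, ∀ z : ℂ,
      xl x (δ - 1) (z + 1) - xl x (δ - 1) z ≠ 0 →
      (sigStar x st tt T δ z + (1 / 2) * tauStar x st tt T δ z *
          (xl x (δ - 1) (z + 1) - xl x (δ - 1) z) =
        sig x st tt (z + 1) + (1 / 2) * T (δ - 2) (z + 1) *
          (xl x (δ - 1) (z + 1) - xl x (δ - 1) z)) ∧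
      (sig x st tt (z + 1) + (1 / 2) * T (δ - 2) (z + 1) *
          (xl x (δ - 1) (z + 1) - xl x (δ - 1) z) =
        A * xl x δ z ^ 2 + B * xl x δ z + C) := by

  have part1 : ∀ z : ℂ, xl x (δ - 1) (z + 1) - xl x (δ - 1) z ≠ 0 →
      sigStar x st tt T δ z + (1 / 2) * tauStar x st tt T δ z *
          (xl x (δ - 1) (z + 1) - xl x (δ - 1) z) =
        sig x st tt (z + 1) + (1 / 2) * T (δ - 2) (z + 1) *
          (xl x (δ - 1) (z + 1) - xl x (δ - 1) z) := by
    intro z hz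
    have h1 := hT δ (z - 1)
    have h2 := hT (δ - 2) (z + 1)
    have hts : tauStar x st tt T δ z * (xl x (δ - 1) (z + 1) - xl x (δ - 1) z) =
        sig x st tt (z + 1) - sig x st tt (z - 1) -
          T δ (z - 1) * (xl x (δ - 1) z - xl x (δ - 1) (z - 1)) :=
      div_mul_cancel₀ _ hz
    simp only [sigStar, sig, xl] at h1 h2 hts ⊢
    push_cast at h1 h2 hts ⊢
    ring_nf at h1 h2 hts ⊢
    linear_combination hts / 2 + h1 / 2 - h2 / 2
  have key : ∀ z : ℂ,
      sig x st tt (z + 1) + (1 / 2) * T (δ - 2) (z + 1) *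
          (xl x (δ - 1) (z + 1) - xl x (δ - 1) z) =
        (1 / 2) * (sig x st tt (z + 1) + sig x st tt (z + (δ : ℂ) - 1) +
          tt.eval (x (z + (δ : ℂ) - 1)) *
            (x (z + (δ : ℂ) - 1 + 1 / 2) - x (z + (δ : ℂ) - 2 + 1 / 2))) := by
    intro z
    have h2 := hT (δ - 2) (z + 1)
    simp only [sig, xl] at h2 ⊢
    push_cast at h2 ⊢
    ring_nf at h2 ⊢
    linear_combination h2 / 2

  obtain (⟨hq, c1, c2, c3, hc, hx, ha, hg⟩ | ⟨c1, c2, c3, hc, hx, ha, hg⟩) := hlat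
  · -- q-quadratic case
    obtain ⟨E, hE_def⟩ : ∃ y, y = Complex.exp (w * (1 / 2)) := ⟨_, rfl⟩
    obtain ⟨E', hE'_def⟩ : ∃ y, y = Complex.exp (-(w * (1 / 2))) := ⟨_, rfl⟩
    obtain ⟨D, hD_def⟩ : ∃ y, y = Complex.exp (w * ((δ : ℂ) / 2)) := ⟨_, rfl⟩
    obtain ⟨D', hD'_def⟩ : ∃ y, y = Complex.exp (-(w * ((δ : ℂ) / 2))) := ⟨_, rfl⟩
    have hreE : E * E' = 1 := by
      rw [hE_def, hE'_def, ← Complex.exp_add,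
        show w * (1 / 2) + -(w * (1 / 2)) = (0 : ℂ) by ring, Complex.exp_zero]
    have hreD : D * D' = 1 := by
      rw [hD_def, hD'_def, ← Complex.exp_add,
        show w * ((δ : ℂ) / 2) + -(w * ((δ : ℂ) / 2)) = (0 : ℂ) by ring, Complex.exp_zero]
    refine ⟨(-1 : ℂ) * st.coeff 2 + (1/2 : ℂ) * E' ^ 4 * D ^ 2 * st.coeff 2 + (-1/4 : ℂ) * E' ^ 5 * D ^ 2 * tt.coeff 1 + (1/4 : ℂ) * E * E' ^ 4 * D ^ 2 * tt.coeff 1 + E ^ 2 * E' ^ 2 * D * D' * st.coeff 2 + (1/2 : ℂ) * E ^ 4 * D' ^ 2 * st.coeff 2 + (1/4 : ℂ) * E ^ 4 * E' * D' ^ 2 * tt.coeff 1 + (-1/4 : ℂ) * E ^ 5 * D' ^ 2 * tt.coeff 1,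
      (2 : ℂ) * c3 * st.coeff 2 + (1/2 : ℂ) * E' ^ 2 * D * st.coeff 1 + E' ^ 2 * D * c3 * st.coeff 2 + (-1/4 : ℂ) * E' ^ 3 * D * tt.coeff 0 + (-1/4 : ℂ) * E' ^ 3 * D * c3 * tt.coeff 1 + (-1 : ℂ) * E' ^ 4 * D ^ 2 * c3 * st.coeff 2 + (1/2 : ℂ) * E' ^ 5 * D ^ 2 * c3 * tt.coeff 1 + (1/4 : ℂ) * E * E' ^ 2 * D * tt.coeff 0 + (1/4 : ℂ) * E * E' ^ 2 * D * c3 * tt.coeff 1 + (-1/2 : ℂ) * E * E' ^ 4 * D ^ 2 * c3 * tt.coeff 1 + (1/2 : ℂ) * E ^ 2 * D' * st.coeff 1 + E ^ 2 * D' * c3 * st.coeff 2 + (1/4 : ℂ) * E ^ 2 * E' * D' * tt.coeff 0 + (1/4 : ℂ) * E ^ 2 * E' * D' * c3 * tt.coeff 1 + (-2 : ℂ) * E ^ 2 * E' ^ 2 * D * D' * c3 * st.coeff 2 + (-1/4 : ℂ) * E ^ 3 * D' * tt.coeff 0 + (-1/4 : ℂ) * E ^ 3 * D' * c3 * tt.coeff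 1 + (-1 : ℂ) * E ^ 4 * D' ^ 2 * c3 * st.coeff 2 + (-1/2 : ℂ) * E ^ 4 * E' * D' ^ 2 * c3 * tt.coeff 1 + (1/2 : ℂ) * E ^ 5 * D' ^ 2 * c3 * tt.coeff 1,
      st.coeff 0 + c3 * st.coeff 1 + (4 : ℂ) * c1 * c2 * st.coeff 2 + (-1/2 : ℂ) * E' ^ 2 * D * c3 * st.coeff 1 + (-1 : ℂ) * E' ^ 2 * D * c3 ^ 2 * st.coeff 2 + (1/4 : ℂ) * E' ^ 3 * D * c3 * tt.coeff 0 + (1/4 : ℂ) * E' ^ 3 * D * c3 ^ 2 * tt.coeff 1 + (1/2 : ℂ) * E' ^ 4 * D ^ 2 * c3 ^ 2 * st.coeff 2 + (-1 : ℂ) * E' ^ 4 * D ^ 2 * c1 * c2 * st.coeff 2 + (-1/4 : ℂ) * E' ^ 5 * D ^ 2 * c3 ^ 2 * tt.coeff 1 + (1/2 : ℂ) * E' ^ 5 * D ^ 2 * c1 * c2 * tt.coeff 1 + (-1/4 : ℂ) * E * E' ^ 2 * D * c3 * tt.coeff 0 + (-1/4 : ℂ) * E * E' ^ 2 * D * c3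 ^ 2 * tt.coeff 1 + (1/4 : ℂ) * E * E' ^ 4 * D ^ 2 * c3 ^ 2 * tt.coeff 1 + (-1/2 : ℂ) * E * E' ^ 4 * D ^ 2 * c1 * c2 * tt.coeff 1 + (-1/2 : ℂ) * E ^ 2 * D' * c3 * st.coeff 1 + (-1 : ℂ) * E ^ 2 * D' * c3 ^ 2 * st.coeff 2 + (-1/4 : ℂ) * E ^ 2 * E' * D' * c3 * tt.coeff 0 + (-1/4 : ℂ) * E ^ 2 * E' * D' * c3 ^ 2 * tt.coeff 1 + E ^ 2 * E' ^ 2 * D * D' * c3 ^ 2 * st.coeff 2 + (-2 : ℂ) * E ^ 2 * E' ^ 2 * D * D' * c1 * c2 * st.coeff 2 + (1/4 : ℂ) * E ^ 3 * D' * c3 * tt.coeff 0 + (1/4 : ℂ) * E ^ 3 * D' * c3 ^ 2 * tt.coeff 1 + (1/2 : ℂ) * E ^ 4 * D' ^ 2 * c3 ^ 2 * st.coeff 2 + (-1 : ℂ) * E ^ 4 * D' ^ 2 * c1 * c2 * st.coeff 2 + (1/4 : ℂ) * E ^ 4 * E' * D' ^ 2 * c3 ^ 2 * tt.coeff 1 +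 (-1/2 : ℂ) * E ^ 4 * E' * D' ^ 2 * c1 * c2 * tt.coeff 1 + (-1/4 : ℂ) * E ^ 5 * D' ^ 2 * c3 ^ 2 * tt.coeff 1 + (1/2 : ℂ) * E ^ 5 * D' ^ 2 * c1 * c2 * tt.coeff 1,
      fun z hz => ⟨part1 z hz, ?_⟩⟩
    rw [key z]
    obtain ⟨t, ht_def⟩ : ∃ y, y = Complex.exp (z * w) := ⟨_, rfl⟩
    obtain ⟨t', ht'_def⟩ : ∃ y, y = Complex.exp (-(z * w)) := ⟨_, rfl⟩
    have hret : t * t' = 1 := by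
      rw [ht_def, ht'_def, ← Complex.exp_add,
        show z * w + -(z * w) = (0 : ℂ) by ring, Complex.exp_zero]
    have hsplit : ∀ (s : ℂ) (k m m' : ℕ),
        s * w = z * w + (k : ℂ) * (w * ((δ : ℂ) / 2)) + (m : ℂ) * (w * (1 / 2)) +
          (m' : ℕ) * (-(w * (1 / 2))) →
        Complex.exp (s * w) = t * D ^ k * E ^ m * E' ^ m' := by
      intro s k m m' h
      rw [h, Complex.exp_add, Complex.exp_add, Complex.exp_add,
        Complex.exp_nat_mul, Complex.exp_nat_mul, Complex.exp_nat_mul,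
        ← ht_def, ← hD_def, ← hE_def, ← hE'_def]
    have hsplit' : ∀ (s : ℂ) (k m m' : ℕ),
        s * w = z * w + (k : ℂ) * (w * ((δ : ℂ) / 2)) + (m : ℂ) * (w * (1 / 2)) +
          (m' : ℕ) * (-(w * (1 / 2))) →
        Complex.exp (-(s * w)) = t' * D' ^ k * E' ^ m * E ^ m' := by
      intro s k m m' h
      have h2 : -(s * w) = -(z * w) + (k : ℂ) * (-(w * ((δ : ℂ) / 2))) +
          (m : ℂ) * (-(w * (1 / 2))) + (m' : ℂ) * (w * (1 / 2)) := by
        linear_combination -h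
      rw [h2, Complex.exp_add, Complex.exp_add, Complex.exp_add,
        Complex.exp_nat_mul, Complex.exp_nat_mul, Complex.exp_nat_mul,
        ← ht'_def, ← hD'_def, ← hE'_def, ← hE_def]
    simp only [sig, xl, eval_deg2 st hst, eval_deg1 tt htt, hx]
    push_cast
    rw [hsplit (z + 1) 0 2 0 (by push_cast; ring),
      hsplit' (z + 1) 0 2 0 (by push_cast; ring),
      hsplit (z + 1 + 1 / 2) 0 3 0 (by push_cast; ring),
      hsplit' (z + 1 + 1 / 2) 0 3 0 (by push_cast; ring),
      hsplit (z + 1 - 1 + 1 / 2) 0 1 0 (by push_cast; ring),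
      hsplit' (z + 1 - 1 + 1 / 2) 0 1 0 (by push_cast; ring),
      hsplit (z + (δ : ℂ) - 1) 2 0 2 (by push_cast; ring),
      hsplit' (z + (δ : ℂ) - 1) 2 0 2 (by push_cast; ring),
      hsplit (z + (δ : ℂ) - 1 + 1 / 2) 2 0 1 (by push_cast; ring),
      hsplit' (z + (δ : ℂ) - 1 + 1 / 2) 2 0 1 (by push_cast; ring),
      hsplit (z + (δ : ℂ) - 1 - 1 + 1 / 2) 2 0 3 (by push_cast; ring),
      hsplit' (z + (δ : ℂ) - 1 - 1 + 1 / 2) 2 0 3 (by push_cast; ring),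
      hsplit (z + (δ : ℂ) - 2 + 1 / 2) 2 0 3 (by push_cast; ring),
      hsplit' (z + (δ : ℂ) - 2 + 1 / 2) 2 0 3 (by push_cast; ring),
      hsplit (z + (δ : ℂ) / 2) 1 0 0 (by push_cast; ring),
      hsplit' (z + (δ : ℂ) / 2) 1 0 0 (by push_cast; ring)]
    linear_combination ((2 : ℂ) * D * D' * c1 * c2 * st.coeff 2 + (-1 : ℂ) * E' ^ 4 * D ^ 3 * D' * c1 * c2 * st.coeff 2 + (1/2 : ℂ) * E' ^ 5 * D ^ 3 * D' * c1 * c2 * tt.coeff 1 + (1/4 : ℂ) * E * E' ^ 2 * c1 * c2 * tt.coeff 1 + (1/4 : ℂ) * E * E' ^ 2 * D ^ 2 * D' ^ 2 * c1 * c2 * tt.coeff 1 + (-1/2 : ℂ) * E * E' ^ 4 * D ^ 3 * D' * c1 * c2 * tt.coeff 1 + (1/4 : ℂ) * E ^ 2 * E' * c1 * c2 * tt.coeff 1 + (1/4 : ℂ) * E ^ 2 * E' * D ^ 2 * D' ^ 2 * c1 * c2 * tt.coeff 1 + E ^ 2 * E' ^ 2 * c1 * c2 * st.coeff 2 + (-1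 : ℂ) * E ^ 2 * E' ^ 2 * D ^ 2 * D' ^ 2 * c1 * c2 * st.coeff 2 + (-1/4 : ℂ) * E ^ 2 * E' ^ 3 * c1 * c2 * tt.coeff 1 + (-1/4 : ℂ) * E ^ 2 * E' ^ 3 * D ^ 2 * D' ^ 2 * c1 * c2 * tt.coeff 1 + (-1/4 : ℂ) * E ^ 3 * E' ^ 2 * c1 * c2 * tt.coeff 1 + (-1/4 : ℂ) * E ^ 3 * E' ^ 2 * D ^ 2 * D' ^ 2 * c1 * c2 * tt.coeff 1 + (-1 : ℂ) * E ^ 4 * D * D' ^ 3 * c1 * c2 * st.coeff 2 + (-1/2 : ℂ) * E ^ 4 * E' * D * D' ^ 3 * c1 * c2 * tt.coeff 1 + (1/2 : ℂ) * E ^ 5 * D * D' ^ 3 * c1 * c2 * tt.coeff 1) * hret + (c1 * c2 * st.coeff 2 + (2 : ℂ) * D * D' * c1 * c2 * st.coeff 2 + (-1 : ℂ) * D ^ 2 * D' ^ 2 * c1 * c2 * st.coeff 2 + (1/2 : ℂ) * E' ^ 3 * D ^ 2 * c1 * c2 * tt.coeff 1 + (-1/2 : ℂ) * E' ^ 3 *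 D ^ 3 * D' * c1 * c2 * tt.coeff 1 + E * E' * c1 * c2 * st.coeff 2 + (2 : ℂ) * E * E' * D * D' * c1 * c2 * st.coeff 2 + (-1 : ℂ) * E * E' * D ^ 2 * D' ^ 2 * c1 * c2 * st.coeff 2 + (-1/4 : ℂ) * E * E' ^ 2 * c1 * c2 * tt.coeff 1 + (-1/4 : ℂ) * E * E' ^ 2 * D ^ 2 * D' ^ 2 * c1 * c2 * tt.coeff 1 + (-1/4 : ℂ) * E ^ 2 * E' * c1 * c2 * tt.coeff 1 + (-1/4 : ℂ) * E ^ 2 * E' * D ^ 2 * D' ^ 2 * c1 * c2 * tt.coeff 1 + (1/2 : ℂ) * E ^ 3 * D' ^ 2 * c1 * c2 * tt.coeff 1 + (-1/2 : ℂ) * E ^ 3 * D * D' ^ 3 * c1 * c2 * tt.coeff 1 + (-1/4 : ℂ) * t' * E' * D * D' * c2 * tt.coeff 0 + (-1/4 : ℂ) * t' * E' * D * D' * c2 * c3 * tt.coeff 1 + (-1/4 : ℂ) * t' * E * D' ^ 2 * c2 * tt.coeff 0 + (-1/4 : ℂ) * t' * E * D' ^ 2 * c2 * c3 * tt.coeff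 1 + (-1 : ℂ) * t' ^ 2 * D * D' ^ 3 * c2 ^ 2 * st.coeff 2 + (-1/4 : ℂ) * t' ^ 2 * E' ^ 3 * D ^ 2 * D' ^ 2 * c2 ^ 2 * tt.coeff 1 + (-1 : ℂ) * t' ^ 2 * E * E' * D * D' ^ 3 * c2 ^ 2 * st.coeff 2 + (-1/4 : ℂ) * t' ^ 2 * E ^ 3 * D' ^ 4 * c2 ^ 2 * tt.coeff 1 + (-1/4 : ℂ) * t * E' * D ^ 2 * c1 * tt.coeff 0 + (-1/4 : ℂ) * t * E' * D ^ 2 * c1 * c3 * tt.coeff 1 + (-1/4 : ℂ) * t * E * D * D' * c1 * tt.coeff 0 + (-1/4 : ℂ) * t * E * D * D' * c1 * c3 * tt.coeff 1 + (-1 : ℂ) * t ^ 2 * D ^ 3 * D' * c1 ^ 2 * st.coeff 2 + (-1/4 : ℂ) * t ^ 2 * E' ^ 3 * D ^ 4 * c1 ^ 2 * tt.coeff 1 + (-1 : ℂ) * t ^ 2 * E * E' * D ^ 3 * D' * c1 ^ 2 * st.coeff 2 + (-1/4 : ℂ) * t ^ 2 * E ^ 3 * D ^ 2 * D' ^ 2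 * c1 ^ 2 * tt.coeff 1) * hreE + ((3 : ℂ) * c1 * c2 * st.coeff 2 + (-1 : ℂ) * D * D' * c1 * c2 * st.coeff 2 + (-1/2 : ℂ) * E' ^ 3 * D ^ 2 * c1 * c2 * tt.coeff 1 + (-1 : ℂ) * E' ^ 4 * D ^ 2 * c1 * c2 * st.coeff 2 + (1/2 : ℂ) * E' ^ 5 * D ^ 2 * c1 * c2 * tt.coeff 1 + (-1/2 : ℂ) * E ^ 3 * D' ^ 2 * c1 * c2 * tt.coeff 1 + (-1 : ℂ) * E ^ 4 * D' ^ 2 * c1 * c2 * st.coeff 2 + (1/2 : ℂ) * E ^ 5 * D' ^ 2 * c1 * c2 * tt.coeff 1 + (-1/4 : ℂ) * t' * E' * c2 * tt.coeff 0 + (-1/4 : ℂ) * t' * E' * c2 * c3 * tt.coeff 1 + (-1/2 : ℂ) * t' * E' ^ 2 * c2 * st.coeff 1 + (-1 : ℂ) * t' * E' ^ 2 * c2 * c3 * st.coeff 2 + (1/4 : ℂ) * t' * E' ^ 3 * c2 * tt.coeff 0 + (1/4 : ℂ) * t' * E' ^ 3 * c2 * c3 * tt.coeff 1 + (-1 :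 ℂ) * t' ^ 2 * D' ^ 2 * c2 ^ 2 * st.coeff 2 + (-1/4 : ℂ) * t' ^ 2 * E' ^ 3 * c2 ^ 2 * tt.coeff 1 + (-1/4 : ℂ) * t' ^ 2 * E' ^ 3 * D * D' * c2 ^ 2 * tt.coeff 1 + (-1/2 : ℂ) * t' ^ 2 * E' ^ 4 * c2 ^ 2 * st.coeff 2 + (-1/2 : ℂ) * t' ^ 2 * E' ^ 4 * D * D' * c2 ^ 2 * st.coeff 2 + (1/4 : ℂ) * t' ^ 2 * E' ^ 5 * c2 ^ 2 * tt.coeff 1 + (1/4 : ℂ) * t' ^ 2 * E' ^ 5 * D * D' * c2 ^ 2 * tt.coeff 1 + (-1/4 : ℂ) * t * E * c1 * tt.coeff 0 + (-1/4 : ℂ) * t * E * c1 * c3 * tt.coeff 1 + (-1/2 : ℂ) * t * E ^ 2 * c1 * st.coeff 1 + (-1 : ℂ) * t * E ^ 2 * c1 * c3 * st.coeff 2 + (1/4 : ℂ) * t * E ^ 3 * c1 * tt.coeff 0 + (1/4 : ℂ) * t * E ^ 3 * c1 * c3 * tt.coeff 1 + (-1 : ℂ) * t ^ 2 * D ^ 2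 * c1 ^ 2 * st.coeff 2 + (-1/4 : ℂ) * t ^ 2 * E ^ 3 * c1 ^ 2 * tt.coeff 1 + (-1/4 : ℂ) * t ^ 2 * E ^ 3 * D * D' * c1 ^ 2 * tt.coeff 1 + (-1/2 : ℂ) * t ^ 2 * E ^ 4 * c1 ^ 2 * st.coeff 2 + (-1/2 : ℂ) * t ^ 2 * E ^ 4 * D * D' * c1 ^ 2 * st.coeff 2 + (1/4 : ℂ) * t ^ 2 * E ^ 5 * c1 ^ 2 * tt.coeff 1 + (1/4 : ℂ) * t ^ 2 * E ^ 5 * D * D' * c1 ^ 2 * tt.coeff 1) * hreD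
  · -- quadratic case
    refine ⟨st.coeff 2,
      6 * st.coeff 2 * c1 * ((δ : ℂ) / 2 - 1) ^ 2 + st.coeff 1 +
        3 * c1 * ((δ : ℂ) / 2 - 1) * tt.coeff 1,
      st.coeff 2 * c1 ^ 2 * ((δ : ℂ) / 2 - 1) ^ 4 -
        4 * st.coeff 2 * ((δ : ℂ) / 2 - 1) ^ 2 * (c1 * c3 - c2 ^ 2 / 4) +
        st.coeff 1 * c1 * ((δ : ℂ) / 2 - 1) ^ 2 + st.coeff 0 +
        tt.coeff 1 * c1 ^ 2 * ((δ : ℂ) / 2 - 1) ^ 3 -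
        2 * tt.coeff 1 * ((δ : ℂ) / 2 - 1) * (c1 * c3 - c2 ^ 2 / 4) +
        tt.coeff 0 * c1 * ((δ : ℂ) / 2 - 1),
      fun z hz => ⟨part1 z hz, ?_⟩⟩
    rw [key z]
    simp only [sig, xl, eval_deg2 st hst, eval_deg1 tt htt, hx]
    push_cast
    ring
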